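/- Let A₁ ≤ … ≤ A_{2r+1} be a chain of (m−1)-element subsets of {2,…,n} such that every (i,j) ∈ V with (i,j) ∉ D_{A_1} ∩ D_{A_{2r+1}} satisfies (i,j) ∉ D_{A_k} for all k ∈ [2r+1]. Then, with δ = ∏_{k=1}^{r+1} β_{A_{2k−1}} and γ = ν · ∏_{k=1}^{2r+1} β_{A_k} (ν the product of all variables x_{i,j} with (i,j) ∈ V), δ² divides γ. -/
import Mathlib


open MvPolynomial Finset

/-- The set `V = {(i,j) ∈ [m]×[n] : m−i < j ≤ n−i+1}` (1-based indices). -/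
def Vset (m n : ℕ) : Finset (ℕ × ℕ) :=
  ((Finset.Icc 1 m) ×ˢ (Finset.Icc 1 n)).filter
    (fun p => m - p.1 < p.2 ∧ p.2 ≤ n - p.1 + 1)

/-- `a : ℕ → ℕ` represents an `(m−1)`-element subset `A = {a 1 < … < a (m−1)} ⊆ {2,…,n}`,
together with the conventions `a 0 = 1` and `a m = n + 1`. -/
def SubsetRep (m n : ℕ) (a : ℕ → ℕ) : Prop :=
  a 0 = 1 ∧ a m = n + 1 ∧ ∀ i < m, a i < a (i + 1)

/-- The region `D_A = {(i,j) ∈ V : a_{m−i} ≤ j < a_{m−i+1}}`. -/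
def Dset (m n : ℕ) (a : ℕ → ℕ) : Finset (ℕ × ℕ) :=
  (Vset m n).filter (fun p => a (m - p.1) ≤ p.2 ∧ p.2 < a (m - p.1 + 1))

variable (K : Type*) [Field K]

/-- The squarefree monomial `β_A = ∏_{(i,j) ∈ V ∖ D_A} x_{i,j}`. -/
noncomputable def betaM (m n : ℕ) (a : ℕ → ℕ) : MvPolynomial (ℕ × ℕ) K :=
  ∏ p ∈ Vset m n \ Dset m n a, X p

/-- The antidiagonal monomial `α_j = ∏_{i=1}^m x_{m−i+1, j+i−1}`. -/
noncomputable def alphaM (m : ℕ) (j : ℕ) : MvPolynomial (ℕ × ℕ) K :=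
  ∏ i ∈ Finset.Icc 1 m, X (m - i + 1, j + i - 1)

/-- The ideal `N` generated by the monomials `β_A` for all `(m−1)`-element subsets
`A ⊆ {2,…,n}`. -/
noncomputable def Nideal (m n : ℕ) : Ideal (MvPolynomial (ℕ × ℕ) K) :=
  Ideal.span { f | ∃ a : ℕ → ℕ, SubsetRep m n a ∧ f = betaM K m n a }

/-- `A k`, `1 ≤ k ≤ s`, is a chain `A₁ ≤ … ≤ A_s` of `(m−1)`-element subsets of `{2,…,n}`,
where `≤` is the componentwise partial order. -/
def BetaChain (m n s : ℕ) (A : ℕ → ℕ → ℕ) : Prop :=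
  (∀ k, 1 ≤ k → k ≤ s → SubsetRep m n (A k)) ∧
    (∀ k, 1 ≤ k → k + 1 ≤ s → ∀ i ≤ m, A k i ≤ A (k + 1) i)

/-- `W^{[2]}` : the ideal generated by the squares of all the monomials in `W`. -/
noncomputable def bracketTwo {σ : Type*} (W : Ideal (MvPolynomial σ K)) :
    Ideal (MvPolynomial σ K) :=
  Ideal.span { g | ∃ d : σ →₀ ℕ, (monomial d (1 : K)) ∈ W ∧ g = (monomial d (1 : K)) ^ 2 }

/-- The symbolic power `I^{(n)} = ⋂_{p ∈ Min(I)} (pⁿ R_p ∩ R)`. -/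
noncomputable def symbolicPower {R : Type*} [CommRing R] (I : Ideal R) (n : ℕ) : Ideal R :=
  ⨅ p : {q : Ideal R // q ∈ I.minimalPrimes},
    letI : p.1.IsPrime := p.2.1.1
    ((p.1 ^ n).map (algebraMap R (Localization.AtPrime p.1))).comap
      (algebraMap R (Localization.AtPrime p.1))

/-- Let `A₁ ≤ … ≤ A_{2r+1}` be a chain such that every point of `V`
outside `D_{A_1} ∩ D_{A_{2r+1}}` is outside every `D_{A_k}`. Then, with
`δ = ∏_{k=1}^{r+1} β_{A_{2k−1}}` and `γ = ν · ∏_{k=1}^{2r+1} β_{A_k}`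
(`ν` the product of all the variables `x_{i,j}`, `(i,j) ∈ V`), `δ²` divides `γ`. -/

lemma chain_mono (m n s : ℕ) (A : ℕ → ℕ → ℕ) (hA : BetaChain m n s A) :
    ∀ k l, 1 ≤ k → k ≤ l → l ≤ s → ∀ i ≤ m, A k i ≤ A l i := by
  intro k l hk hkl hls i him
  induction l with
  | zero => omega
  | succ l ih =>
    rcases Nat.eq_or_lt_of_le hkl with h | h
    · subst h; exact le_rfl
    · exact le_trans (ih (by omega) (by omega)) (hA.2 l (by omega) (by omega) i him)

theorem stmt_18 (m n r : ℕ) (hm : 1 ≤ m) (hmn : m ≤ n)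
    (A : ℕ → ℕ → ℕ) (hA : BetaChain m n (2 * r + 1) A)
    (hyp : ∀ p ∈ Vset m n, p ∉ Dset m n (A 1) ∩ Dset m n (A (2 * r + 1)) →
      ∀ k, 1 ≤ k → k ≤ 2 * r + 1 → p ∉ Dset m n (A k)) :
    (∏ k ∈ Finset.Icc 1 (r + 1), betaM K m n (A (2 * k - 1))) ^ 2 ∣
      (∏ p ∈ Vset m n, (X p : MvPolynomial (ℕ × ℕ) K)) *
        ∏ k ∈ Finset.Icc 1 (2 * r + 1), betaM K m n (A k) := by
  classical
  set S := Dset m n (A 1) ∩ Dset m n (A (2 * r + 1)) with hS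
  have hSV : S ⊆ Vset m n := by
    intro p hp
    have := (Finset.mem_inter.mp hp).1
    exact Finset.mem_of_mem_filter p this
  have hDeq : ∀ k, 1 ≤ k → k ≤ 2 * r + 1 → Dset m n (A k) = S := by
    intro k hk1 hk2
    apply Finset.Subset.antisymm
    · intro p hp
      have hpV : p ∈ Vset m n := Finset.mem_of_mem_filter p hp
      by_contra hpS
      exact hyp p hpV hpS k hk1 hk2 hp
    · intro p hp
      obtain ⟨hp1, hp2⟩ := Finset.mem_inter.mp hp
      have hpV : p ∈ Vset m n := Finset.mem_of_mem_filter p hp1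
      rw [Dset, Finset.mem_filter] at hp1 hp2 ⊢
      refine ⟨hpV, ?_, ?_⟩
      · exact le_trans (chain_mono m n (2*r+1) A hA k (2*r+1) hk1 hk2 le_rfl
          (m - p.1) (by omega)) hp2.2.1
      · refine lt_of_lt_of_le hp1.2.2 ?_
        have hp1m : 1 ≤ p.1 := by
          rw [Vset, Finset.mem_filter, Finset.mem_product, Finset.mem_Icc] at hpV
          exact hpV.1.1.1
        have hp1M : p.1 ≤ m := by
          rw [Vset, Finset.mem_filter, Finset.mem_product, Finset.mem_Icc] at hpV
          exact hpV.1.1.2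
        exact chain_mono m n (2*r+1) A hA 1 k le_rfl hk1 hk2 (m - p.1 + 1) (by omega)
  have hbeta : ∀ k, 1 ≤ k → k ≤ 2 * r + 1 →
      betaM K m n (A k) = ∏ p ∈ Vset m n \ S, X p := by
    intro k hk1 hk2
    rw [betaM, hDeq k hk1 hk2]
  set B : MvPolynomial (ℕ × ℕ) K := ∏ p ∈ Vset m n \ S, X p with hB
  have h1 : ∏ k ∈ Finset.Icc 1 (r + 1), betaM K m n (A (2 * k - 1)) = B ^ (r + 1) := by
    have : ∏ k ∈ Finset.Icc 1 (r + 1), betaM K m n (A (2 * k - 1)) =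
        ∏ _k ∈ Finset.Icc 1 (r + 1), B :=
      Finset.prod_congr rfl (fun k hk => by
        rw [Finset.mem_Icc] at hk
        exact hbeta (2 * k - 1) (by omega) (by omega))
    rw [this, Finset.prod_const, Nat.card_Icc]; norm_num
  have h2 : ∏ k ∈ Finset.Icc 1 (2 * r + 1), betaM K m n (A k) = B ^ (2 * r + 1) := by
    have : ∏ k ∈ Finset.Icc 1 (2 * r + 1), betaM K m n (A k) =
        ∏ _k ∈ Finset.Icc 1 (2 * r + 1), B :=
      Finset.prod_congr rfl (fun k hk => by
        rw [Finset.mem_Icc] at hk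
        exact hbeta k hk.1 hk.2)
    rw [this, Finset.prod_const, Nat.card_Icc]; norm_num
  have h3 : (∏ p ∈ Vset m n, (X p : MvPolynomial (ℕ × ℕ) K)) =
      B * ∏ p ∈ S, X p := by
    rw [hB, Finset.prod_sdiff hSV]
  rw [h1, h2, h3]
  refine ⟨∏ p ∈ S, X p, by ring⟩
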